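/- If u is four times continuously differentiable on a neighborhood of [−2h, 2h] and p is the unique cubic polynomial whose averages over the cells I_i = (ih,(i+1)h), i = −2,−1,0,1, agree with those of u, then |p(0) − u(0)| ≤ C·h⁴·sup|u⁽⁴⁾| and |p'(0) − u'(0)| ≤ C·h³·sup|u⁽⁴⁾| for a constant C independent of h and u. -/

import Mathlib

open intervalIntegral

private lemma iterWithin_eq {s : Set ℝ} {u : ℝ → ℝ} (hs : IsOpen s)
    {a b : ℝ} (hab : a < b) (hsub : Set.Icc a b ⊆ s) (hu : ContDiffOn ℝ 4 u s)
    (k : ℕ) (hk : k ≤ 4) {x : ℝ} (hx : x ∈ Set.Icc a b) :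
    iteratedDerivWithin k u (Set.Icc a b) x = iteratedDeriv k u x := by
  have H : HasFTaylorSeriesUpToOn 4 u (ftaylorSeriesWithin ℝ u s) (Set.Icc a b) :=
    (hu.ftaylorSeriesWithin hs.uniqueDiffOn).mono hsub
  have h1 := H.eq_iteratedFDerivWithin_of_uniqueDiffOn (m := k)
    (by exact_mod_cast hk) (uniqueDiffOn_Icc hab) hx
  have h2 : iteratedFDerivWithin ℝ k u s x = iteratedFDeriv ℝ k u x :=
    iteratedFDerivWithin_of_isOpen k hs (hsub hx)
  rw [iteratedDerivWithin_eq_iteratedFDerivWithin, ← h1]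
  show (iteratedFDerivWithin ℝ k u s x) (fun _ => 1) = _
  rw [h2]
  rfl

private lemma taylor_est_right {b M : ℝ} (hb : 0 < b) {v : ℝ → ℝ} {t : Set ℝ}
    (ht : IsOpen t) (hsub : Set.Icc (0:ℝ) b ⊆ t) (hv : ContDiffOn ℝ 4 v t)
    (hM : ∀ y ∈ Set.Icc (0:ℝ) b, |iteratedDeriv 4 v y| ≤ M) :
    ∀ x ∈ Set.Icc (0:ℝ) b,
      |v x - (v 0 + deriv v 0 * x + iteratedDeriv 2 v 0 / 2 * x ^ 2 +
        iteratedDeriv 3 v 0 / 6 * x ^ 3)| ≤ M * x ^ 4 / 6 := by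
  intro x hx
  have hu4 : ContDiffOn ℝ ((3:ℕ) + 1) v (Set.Icc 0 b) := by
    exact_mod_cast hv.mono hsub
  have hC : ∀ y ∈ Set.Icc (0:ℝ) b, ‖iteratedDerivWithin 4 v (Set.Icc 0 b) y‖ ≤ M := by
    intro y hy
    rw [Real.norm_eq_abs, iterWithin_eq ht hb hsub hv 4 le_rfl hy]
    exact hM y hy
  have key := taylor_mean_remainder_bound (n := 3) hb.le hu4 hx hC
  rw [taylor_within_apply] at key
  simp only [Finset.sum_range_succ, Finset.sum_range_zero] at key
  have h0mem : (0:ℝ) ∈ Set.Icc (0:ℝ) b := Set.left_mem_Icc.2 hb.le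
  rw [iterWithin_eq ht hb hsub hv 0 (by norm_num) h0mem,
      iterWithin_eq ht hb hsub hv 1 (by norm_num) h0mem,
      iterWithin_eq ht hb hsub hv 2 (by norm_num) h0mem,
      iterWithin_eq ht hb hsub hv 3 (by norm_num) h0mem] at key
  simp only [iteratedDeriv_zero, iteratedDeriv_one, smul_eq_mul, Real.norm_eq_abs] at key
  norm_num [Nat.factorial] at key
  calc |v x - (v 0 + deriv v 0 * x + iteratedDeriv 2 v 0 / 2 * x ^ 2 +
        iteratedDeriv 3 v 0 / 6 * x ^ 3)| =
      |v x - (0 + v 0 + x * deriv v 0 + 2⁻¹ * x ^ 2 * iteratedDeriv 2 v 0 +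
        6⁻¹ * x ^ 3 * iteratedDeriv 3 v 0)| := by ring_nf
    _ ≤ M * x ^ 4 / 6 := by
        convert key using 2
        ring

private lemma taylor_est {h M : ℝ} (hh : 0 < h) {u : ℝ → ℝ} {s : Set ℝ}
    (hs : IsOpen s) (hsub : Set.Icc (-(2 * h)) (2 * h) ⊆ s) (hu : ContDiffOn ℝ 4 u s)
    (hM : ∀ x ∈ Set.Icc (-(2 * h)) (2 * h), |iteratedDeriv 4 u x| ≤ M) :
    ∀ x ∈ Set.Icc (-(2 * h)) (2 * h),
      |u x - (u 0 + deriv u 0 * x + iteratedDeriv 2 u 0 / 2 * x ^ 2 +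
        iteratedDeriv 3 u 0 / 6 * x ^ 3)| ≤ M * x ^ 4 / 6 := by
  intro x hx
  have h2h : (0:ℝ) < 2 * h := by linarith
  rcases le_or_gt 0 x with hx0 | hx0
  · have hsub' : Set.Icc (0:ℝ) (2*h) ⊆ s := fun y hy => hsub ⟨by linarith [hy.1], hy.2⟩
    exact taylor_est_right h2h hs hsub' hu
      (fun y hy => hM y ⟨by linarith [hy.1], hy.2⟩) x ⟨hx0, hx.2⟩
  · set g : ℝ → ℝ := fun y => u (-y) with hgdef
    have hscont : IsOpen ((fun y : ℝ => -y) ⁻¹' s) := hs.preimage continuous_neg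
    have hgsub : Set.Icc (0:ℝ) (2*h) ⊆ (fun y : ℝ => -y) ⁻¹' s := by
      intro y hy
      exact hsub ⟨by simp; linarith [hy.2], by simp; linarith [hy.1]⟩
    have hg : ContDiffOn ℝ 4 g ((fun y : ℝ => -y) ⁻¹' s) :=
      hu.comp (contDiff_neg.contDiffOn) (fun y hy => hy)
    have hMg : ∀ y ∈ Set.Icc (0:ℝ) (2*h), |iteratedDeriv 4 g y| ≤ M := by
      intro y hy
      rw [hgdef, iteratedDeriv_comp_neg]
      simp only [smul_eq_mul]
      rw [show ((-1:ℝ))^4 = 1 by norm_num, one_mul]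
      exact hM (-y) ⟨by linarith [hy.2], by linarith [hy.1]⟩
    have key := taylor_est_right h2h hscont hgsub hg hMg (-x) ⟨by linarith, by linarith [hx.1]⟩
    have e0 : g 0 = u 0 := by simp [hgdef]
    have egx : g (-x) = u x := by simp [hgdef]
    have e1 : deriv g 0 = -deriv u 0 := by
      have := iteratedDeriv_comp_neg 1 u 0
      simpa [hgdef, iteratedDeriv_one] using this
    have e2 : iteratedDeriv 2 g 0 = iteratedDeriv 2 u 0 := by
      have := iteratedDeriv_comp_neg 2 u 0
      simpa [hgdef] using this
    have e3 : iteratedDeriv 3 g 0 = -iteratedDeriv 3 u 0 := by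
      have h3 := iteratedDeriv_comp_neg 3 u 0
      simp only [smul_eq_mul, neg_zero, show ((-1:ℝ))^3 = -1 from by norm_num,
        neg_one_mul] at h3
      exact hgdef ▸ h3
    rw [egx, e0, e1, e2, e3] at key
    calc |u x - (u 0 + deriv u 0 * x + iteratedDeriv 2 u 0 / 2 * x ^ 2 +
          iteratedDeriv 3 u 0 / 6 * x ^ 3)| =
        |u x - (u 0 + -deriv u 0 * -x + iteratedDeriv 2 u 0 / 2 * (-x) ^ 2 +
          -iteratedDeriv 3 u 0 / 6 * (-x) ^ 3)| := by ring_nf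
      _ ≤ M * (-x) ^ 4 / 6 := key
      _ = M * x ^ 4 / 6 := by ring

private lemma poly_int (b0 b1 b2 b3 a b : ℝ) :
    ∫ x in a..b, (b3 * x ^ 3 + b2 * x ^ 2 + b1 * x + b0) =
      b3 * (b ^ 4 - a ^ 4) / 4 + b2 * (b ^ 3 - a ^ 3) / 3 +
        b1 * (b ^ 2 - a ^ 2) / 2 + b0 * (b - a) := by
  have i3 : IntervalIntegrable (fun x : ℝ => b3 * x ^ 3) MeasureTheory.volume a b :=
    (by continuity : Continuous fun x : ℝ => b3 * x ^ 3).intervalIntegrable a b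
  have i2 : IntervalIntegrable (fun x : ℝ => b2 * x ^ 2) MeasureTheory.volume a b :=
    (by continuity : Continuous fun x : ℝ => b2 * x ^ 2).intervalIntegrable a b
  have i1 : IntervalIntegrable (fun x : ℝ => b1 * x) MeasureTheory.volume a b :=
    (by continuity : Continuous fun x : ℝ => b1 * x).intervalIntegrable a b
  have i0 : IntervalIntegrable (fun _ : ℝ => b0) MeasureTheory.volume a b :=
    intervalIntegrable_const
  rw [integral_add ((i3.add i2).add i1) i0, integral_add (i3.add i2) i1,
    integral_add i3 i2, integral_const_mul, integral_const_mul, integral_const_mul,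
    integral_pow, integral_pow, integral_id, integral_const]
  norm_num
  ring

private lemma cell_eq {h : ℝ} (hh : 0 < h) {u : ℝ → ℝ} {a0 a1 a2 a3 α β : ℝ}
    (hav : (1/h) * ∫ x in α..β, (a3 * x ^ 3 + a2 * x ^ 2 + a1 * x + a0) =
      (1/h) * ∫ x in α..β, u x) :
    ∫ x in α..β, u x =
      a3 * (β ^ 4 - α ^ 4) / 4 + a2 * (β ^ 3 - α ^ 3) / 3 +
        a1 * (β ^ 2 - α ^ 2) / 2 + a0 * (β - α) := by
  rw [poly_int] at hav
  exact (mul_left_cancel₀ (one_div_ne_zero hh.ne') hav).symm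

private lemma cell_bound' {h B c0 c1 c2 c3 : ℝ} {u : ℝ → ℝ}
    (hcont : ContinuousOn u (Set.Icc (-(2 * h)) (2 * h)))
    (hR : ∀ x ∈ Set.Icc (-(2 * h)) (2 * h),
      |u x - (c3 * x ^ 3 + c2 * x ^ 2 + c1 * x + c0)| ≤ B)
    {α β : ℝ} (hαβ : α ≤ β) (hsub : Set.Icc α β ⊆ Set.Icc (-(2 * h)) (2 * h))
    (hlen : β - α = h) :
    |(∫ x in α..β, u x) - (c3 * (β ^ 4 - α ^ 4) / 4 + c2 * (β ^ 3 - α ^ 3) / 3 +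
      c1 * (β ^ 2 - α ^ 2) / 2 + c0 * (β - α))| ≤ B * h := by
  rw [← poly_int]
  have hui : IntervalIntegrable u MeasureTheory.volume α β := by
    apply ContinuousOn.intervalIntegrable
    rw [Set.uIcc_of_le hαβ]
    exact hcont.mono hsub
  have hTi : IntervalIntegrable (fun x : ℝ => c3 * x ^ 3 + c2 * x ^ 2 + c1 * x + c0)
      MeasureTheory.volume α β :=
    (by continuity : Continuous fun x : ℝ => c3 * x ^ 3 + c2 * x ^ 2 + c1 * x + c0)
      |>.intervalIntegrable α β
  rw [← integral_sub hui hTi]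
  have hb := intervalIntegral.norm_integral_le_of_norm_le_const (C := B)
    (f := fun x => u x - (c3 * x ^ 3 + c2 * x ^ 2 + c1 * x + c0)) (a := α) (b := β) ?_
  · rw [Real.norm_eq_abs] at hb
    calc |∫ x in α..β, (u x - (c3 * x ^ 3 + c2 * x ^ 2 + c1 * x + c0))| ≤ B * |β - α| := hb
      _ = B * h := by
          rw [hlen, abs_of_nonneg]
          nlinarith [hsub (Set.left_mem_Icc.2 hαβ), hsub (Set.right_mem_Icc.2 hαβ)]
  · intro x hx
    rw [Set.uIoc_of_le hαβ] at hx
    exact hR x (hsub ⟨hx.1.le, hx.2⟩)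

set_option maxHeartbeats 1000000 in
/-- Accuracy of the interpolating cubic at the boundary: fourth-order for the value
and third-order for the derivative, with a constant independent of h and u. -/
theorem cubic_interpolation_boundary_accuracy :
    ∃ C : ℝ, 0 < C ∧
      ∀ h : ℝ, 0 < h →
      ∀ (u : ℝ → ℝ) (s : Set ℝ), IsOpen s → Set.Icc (-(2 * h)) (2 * h) ⊆ s →
        ContDiffOn ℝ 4 u s →
      ∀ M : ℝ, (∀ x ∈ Set.Icc (-(2 * h)) (2 * h), |iteratedDeriv 4 u x| ≤ M) →
      ∀ a0 a1 a2 a3 : ℝ,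
        (∀ i : ℤ, i ∈ ({-2, -1, 0, 1} : Set ℤ) →
          (1 / h) * ∫ x in ((i : ℝ) * h)..(((i : ℝ) + 1) * h),
              (a3 * x ^ 3 + a2 * x ^ 2 + a1 * x + a0) =
            (1 / h) * ∫ x in ((i : ℝ) * h)..(((i : ℝ) + 1) * h), u x) →
        |a0 - u 0| ≤ C * h ^ 4 * M ∧ |a1 - deriv u 0| ≤ C * h ^ 3 * M := by
  refine ⟨8, by norm_num, ?_⟩
  intro h hh u s hs hsub hu M hM a0 a1 a2 a3 hAvg
  have hM0 : 0 ≤ M := le_trans (abs_nonneg _) (hM 0 ⟨by linarith, by linarith⟩)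
  have hcont : ContinuousOn u (Set.Icc (-(2 * h)) (2 * h)) := hu.continuousOn.mono hsub
  -- Taylor coefficients
  set c0 : ℝ := u 0 with hc0
  set c1 : ℝ := deriv u 0 with hc1
  set c2 : ℝ := iteratedDeriv 2 u 0 / 2 with hc2
  set c3 : ℝ := iteratedDeriv 3 u 0 / 6 with hc3
  set B : ℝ := M * (2 * h) ^ 4 / 6 with hB
  have hR : ∀ x ∈ Set.Icc (-(2 * h)) (2 * h),
      |u x - (c3 * x ^ 3 + c2 * x ^ 2 + c1 * x + c0)| ≤ B := by
    intro x hx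
    have h1 := taylor_est hh hs hsub hu hM x hx
    have e : u 0 + deriv u 0 * x + iteratedDeriv 2 u 0 / 2 * x ^ 2 +
        iteratedDeriv 3 u 0 / 6 * x ^ 3 = c3 * x ^ 3 + c2 * x ^ 2 + c1 * x + c0 := by
      rw [hc0, hc1, hc2, hc3]; ring
    rw [e] at h1
    refine h1.trans ?_
    rw [hB]
    have hx4 : x ^ 4 ≤ (2 * h) ^ 4 := by
      have hax : |x| ≤ 2 * h := abs_le.mpr ⟨hx.1, hx.2⟩
      calc x ^ 4 = |x ^ 4| := (abs_of_nonneg (by positivity)).symm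
        _ = |x| ^ 4 := abs_pow x 4
        _ ≤ (2 * h) ^ 4 := by
            exact pow_le_pow_left₀ (abs_nonneg x) hax 4
    have := mul_le_mul_of_nonneg_left hx4 hM0
    linarith
  -- the four cell identities
  have A2 := hAvg (-2) (by norm_num)
  have A1 := hAvg (-1) (by norm_num)
  have A0 := hAvg 0 (by norm_num)
  have A1' := hAvg 1 (by norm_num)
  push_cast at A2 A1 A0 A1'
  have g2 := cell_eq hh A2
  have g1 := cell_eq hh A1
  have g0 := cell_eq hh A0
  have g1' := cell_eq hh A1'
  -- the four cell bounds
  have F2 := cell_bound' (α := (-2 : ℝ) * h) (β := ((-2 : ℝ) + 1) * h)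
    hcont hR (by nlinarith) (Set.Icc_subset_Icc (by nlinarith) (by nlinarith)) (by ring)
  have F1 := cell_bound' (α := (-1 : ℝ) * h) (β := ((-1 : ℝ) + 1) * h)
    hcont hR (by nlinarith) (Set.Icc_subset_Icc (by nlinarith) (by nlinarith)) (by ring)
  have F0 := cell_bound' (α := (0 : ℝ) * h) (β := ((0 : ℝ) + 1) * h)
    hcont hR (by nlinarith) (Set.Icc_subset_Icc (by nlinarith) (by nlinarith)) (by ring)
  have F1' := cell_bound' (α := (1 : ℝ) * h) (β := ((1 : ℝ) + 1) * h)
    hcont hR (by nlinarith) (Set.Icc_subset_Icc (by nlinarith) (by nlinarith)) (by ring)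
  rw [g2] at F2
  rw [g1] at F1
  rw [g0] at F0
  rw [g1'] at F1'
  ring_nf at F2 F1 F0 F1'
  rw [abs_le] at F2 F1 F0 F1'
  have hhB : h * B = h ^ 5 * M * (8/3) := by rw [hB]; ring
  have key0a : (a0 - c0) * (12 * h) ≤ 16 * (h ^ 5 * M * (8/3)) := by
    linarith only [F1.2, F0.2, F2.1, F1'.1, hhB]
  have key0b : -(16 * (h ^ 5 * M * (8/3))) ≤ (a0 - c0) * (12 * h) := by
    linarith only [F1.1, F0.1, F2.2, F1'.2, hhB]
  have key1a : (a1 - c1) * (12 * h ^ 2) ≤ 32 * (h ^ 5 * M * (8/3)) := by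
    linarith only [F0.2, F1.1, F1'.1, F2.2, hhB]
  have key1b : -(32 * (h ^ 5 * M * (8/3))) ≤ (a1 - c1) * (12 * h ^ 2) := by
    linarith only [F0.1, F1.2, F1'.2, F2.1, hhB]
  have hM5 : 0 ≤ M * h ^ 5 := mul_nonneg hM0 (pow_pos hh 5).le
  clear F2 F1 F0 F1' g2 g1 g0 g1' A2 A1 A0 A1' hAvg hR hM hcont hu hsub hs
  constructor
  · rw [abs_le]
    constructor
    · nlinarith only [key0b, hh, hM5]
    · nlinarith only [key0a, hh, hM5]
  · rw [abs_le]
    constructor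
    · nlinarith only [key1b, hh, hM5, mul_pos hh hh]
    · nlinarith only [key1a, hh, hM5, mul_pos hh hh]
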